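/- There exists a quasi-uniform random vector (X_1, X_2, X_3) with finite alphabets whose entropy vector h satisfies all of the following: (i) h is a nonnegative linear combination of e_1, e_2, e_3, e_{123'}; (ii) h is not a nonnegative linear combination of any proper subset of {e_1, e_2, e_3, e_{123'}}; and (iii) there is no choice of λ_1, λ_2, λ_3 ≥ 0 and positive integer m with h = λ_1·e_1 + λ_2·e_2 + λ_3·e_3 + (log₂ m)·e_{123'}. -/
import Mathlib


open Finset

/-- Probability that the discrete random variable `X` (on finite sample space `Fin N`
with probability mass function `p`) takes the value `a`. -/
noncomputable def pr {N : ℕ} (p : Fin N → ℝ) {A : Type} [DecidableEq A]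
    (X : Fin N → A) (a : A) : ℝ :=
  ∑ ω, if X ω = a then p ω else 0

/-- Base-2 Shannon entropy of the random variable `X` under the pmf `p`. -/
noncomputable def ent {N : ℕ} (p : Fin N → ℝ) {A : Type} [Fintype A] [DecidableEq A]
    (X : Fin N → A) : ℝ :=
  -∑ a, pr p X a * Real.logb 2 (pr p X a)

/-- `p` is a probability mass function. -/
def IsDist {N : ℕ} (p : Fin N → ℝ) : Prop :=
  (∀ ω, 0 ≤ p ω) ∧ ∑ ω, p ω = 1

/-- The entropy vector of three finite-alphabet random variables, with components
(H(X₁), H(X₂), H(X₃), H(X₁X₂), H(X₁X₃), H(X₂X₃), H(X₁X₂X₃)). -/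
noncomputable def entVec3 {N a₁ a₂ a₃ : ℕ} (p : Fin N → ℝ)
    (X₁ : Fin N → Fin a₁) (X₂ : Fin N → Fin a₂) (X₃ : Fin N → Fin a₃) : Fin 7 → ℝ :=
  ![ent p X₁, ent p X₂, ent p X₃,
    ent p (fun ω => (X₁ ω, X₂ ω)),
    ent p (fun ω => (X₁ ω, X₃ ω)),
    ent p (fun ω => (X₂ ω, X₃ ω)),
    ent p (fun ω => (X₁ ω, X₂ ω, X₃ ω))]

/-- `h ∈ ℝ⁷` is the entropy vector of some triple of finite-alphabet random variables. -/
def IsEntropic (h : Fin 7 → ℝ) : Prop :=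
  ∃ (N a₁ a₂ a₃ : ℕ) (p : Fin N → ℝ)
    (X₁ : Fin N → Fin a₁) (X₂ : Fin N → Fin a₂) (X₃ : Fin N → Fin a₃),
    IsDist p ∧ entVec3 p X₁ X₂ X₃ = h

noncomputable def e1 : Fin 7 → ℝ := ![1,0,0,1,1,0,1]
noncomputable def e2 : Fin 7 → ℝ := ![0,1,0,1,0,1,1]
noncomputable def e3 : Fin 7 → ℝ := ![0,0,1,0,1,1,1]
noncomputable def e12 : Fin 7 → ℝ := ![1,1,0,1,1,1,1]
noncomputable def e13 : Fin 7 → ℝ := ![1,0,1,1,1,1,1]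
noncomputable def e23 : Fin 7 → ℝ := ![0,1,1,1,1,1,1]
noncomputable def e123 : Fin 7 → ℝ := ![1,1,1,1,1,1,1]
noncomputable def e123' : Fin 7 → ℝ := ![1,1,1,2,2,2,2]

/-- The random variable `X` is quasi-uniform: there is a constant `q ∈ (0,1]` such that
every point probability is either `0` or `q`. -/
def QU {N : ℕ} (p : Fin N → ℝ) {A : Type} [DecidableEq A] (X : Fin N → A) : Prop :=
  ∃ q : ℝ, 0 < q ∧ q ≤ 1 ∧ ∀ a, pr p X a = 0 ∨ pr p X a = q

/-- The random vector (X₁,X₂,X₃) is quasi-uniform: every one of the seven nonempty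
sub-vectors is quasi-uniform. -/
def QuasiUniform3 {N a₁ a₂ a₃ : ℕ} (p : Fin N → ℝ)
    (X₁ : Fin N → Fin a₁) (X₂ : Fin N → Fin a₂) (X₃ : Fin N → Fin a₃) : Prop :=
  QU p X₁ ∧ QU p X₂ ∧ QU p X₃ ∧
  QU p (fun ω => (X₁ ω, X₂ ω)) ∧ QU p (fun ω => (X₁ ω, X₃ ω)) ∧
  QU p (fun ω => (X₂ ω, X₃ ω)) ∧ QU p (fun ω => (X₁ ω, X₂ ω, X₃ ω))


set_option maxHeartbeats 1000000

@[simp] lemma cons_val_five {α : Type*} {m : ℕ} (x : α)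
    (u : Fin m.succ.succ.succ.succ.succ → α) :
    Matrix.vecCons x u 5 =
      Matrix.vecHead (Matrix.vecTail (Matrix.vecTail (Matrix.vecTail (Matrix.vecTail u)))) :=
  rfl

@[simp] lemma cons_val_six {α : Type*} {m : ℕ} (x : α)
    (u : Fin m.succ.succ.succ.succ.succ.succ → α) :
    Matrix.vecCons x u 6 =
      Matrix.vecHead (Matrix.vecTail (Matrix.vecTail (Matrix.vecTail
        (Matrix.vecTail (Matrix.vecTail u))))) :=
  rfl

/-! ### Auxiliary construction and lemmas -/

def Y1 : Fin 144 → Fin 6 := fun ω => ⟨ω.val / 24, by omega⟩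
def Y2 : Fin 144 → Fin 6 := fun ω => ⟨ω.val / 4 % 6, by omega⟩
def Y3 : Fin 144 → Fin 6 := fun ω => ⟨(ω.val / 24 + ω.val / 4 % 6 + ω.val % 4) % 6, by omega⟩

lemma Yinj : Function.Injective (fun ω => (Y1 ω, Y2 ω, Y3 ω)) := by
  intro ω ω' h
  simp only [Prod.mk.injEq, Y1, Y2, Y3, Fin.mk.injEq] at h
  obtain ⟨h1, h2, h3⟩ := h
  have := ω.isLt; have := ω'.isLt
  ext
  omega

lemma pr_const {N : ℕ} (c : ℝ) {A : Type} [DecidableEq A] (X : Fin N → A) (a : A) :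
    pr (fun _ => c) X a = ((univ.filter fun ω => X ω = a).card : ℝ) * c := by
  unfold pr
  rw [← Finset.sum_filter, Finset.sum_const, nsmul_eq_mul]

lemma sum_pr {N : ℕ} {p : Fin N → ℝ} {A : Type} [Fintype A] [DecidableEq A]
    (X : Fin N → A) : ∑ a, pr p X a = ∑ ω, p ω := by
  unfold pr
  rw [Finset.sum_comm]
  simp

lemma ent_of_qu {N : ℕ} {p : Fin N → ℝ} {A : Type} [Fintype A] [DecidableEq A]
    {X : Fin N → A} {q : ℝ} (hp : ∑ ω, p ω = 1)
    (h : ∀ a, pr p X a = 0 ∨ pr p X a = q) : ent p X = -Real.logb 2 q := by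
  unfold ent
  have hs : ∑ a, pr p X a * Real.logb 2 (pr p X a) = ∑ a, pr p X a * Real.logb 2 q := by
    refine Finset.sum_congr rfl fun a _ => ?_
    rcases h a with h0 | hq
    · simp [h0]
    · rw [hq]
  rw [hs, ← Finset.sum_mul, sum_pr, hp, one_mul]

lemma card1 : ∀ a : Fin 6, (univ.filter fun ω : Fin 144 => Y1 ω = a).card = 24 := by decide
lemma card2 : ∀ a : Fin 6, (univ.filter fun ω : Fin 144 => Y2 ω = a).card = 24 := by decide
lemma card3 : ∀ a : Fin 6, (univ.filter fun ω : Fin 144 => Y3 ω = a).card = 24 := by decide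
lemma card12 : ∀ a : Fin 6 × Fin 6,
    (univ.filter fun ω : Fin 144 => (Y1 ω, Y2 ω) = a).card = 4 := by decide
lemma card13 : ∀ a : Fin 6 × Fin 6,
    (univ.filter fun ω : Fin 144 => (Y1 ω, Y3 ω) = a).card = 4 := by decide
lemma card23 : ∀ a : Fin 6 × Fin 6,
    (univ.filter fun ω : Fin 144 => (Y2 ω, Y3 ω) = a).card = 4 := by decide
lemma card123 : ∀ a : Fin 6 × Fin 6 × Fin 6,
    (univ.filter fun ω : Fin 144 => (Y1 ω, Y2 ω, Y3 ω) = a).card = 0 ∨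
    (univ.filter fun ω : Fin 144 => (Y1 ω, Y2 ω, Y3 ω) = a).card = 1 := by
  intro a
  have h : (univ.filter fun ω : Fin 144 => (Y1 ω, Y2 ω, Y3 ω) = a).card ≤ 1 := by
    apply Finset.card_le_one.mpr
    intro x hx y hy
    simp only [mem_filter] at hx hy
    exact Yinj (hx.2.trans hy.2.symm)
  omega

/-- There is a quasi-uniform triple of finite-alphabet random variables whose entropy
vector h is (i) a nonnegative combination of e₁,e₂,e₃,e₁₂₃'; (ii) not a nonnegative
combination of any proper subset of {e₁,e₂,e₃,e₁₂₃'}; (iii) not representable with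
λ₁,λ₂,λ₃ ≥ 0 and coefficient log₂ m (m a positive integer) on e₁₂₃'. -/
theorem stmt9 :
    ∃ (N a₁ a₂ a₃ : ℕ) (p : Fin N → ℝ)
      (X₁ : Fin N → Fin a₁) (X₂ : Fin N → Fin a₂) (X₃ : Fin N → Fin a₃),
      IsDist p ∧ QuasiUniform3 p X₁ X₂ X₃ ∧
      (∃ c1 c2 c3 c4 : ℝ, 0 ≤ c1 ∧ 0 ≤ c2 ∧ 0 ≤ c3 ∧ 0 ≤ c4 ∧
        entVec3 p X₁ X₂ X₃ = c1 • e1 + c2 • e2 + c3 • e3 + c4 • e123') ∧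
      (∀ c1 c2 c3 c4 : ℝ, 0 ≤ c1 → 0 ≤ c2 → 0 ≤ c3 → 0 ≤ c4 →
        entVec3 p X₁ X₂ X₃ = c1 • e1 + c2 • e2 + c3 • e3 + c4 • e123' →
        c1 ≠ 0 ∧ c2 ≠ 0 ∧ c3 ≠ 0 ∧ c4 ≠ 0) ∧
      ¬∃ (l1 l2 l3 : ℝ) (m : ℕ), 0 ≤ l1 ∧ 0 ≤ l2 ∧ 0 ≤ l3 ∧ 0 < m ∧
        entVec3 p X₁ X₂ X₃ =
          l1 • e1 + l2 • e2 + l3 • e3 + Real.logb 2 (m : ℝ) • e123' := by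
  set p : Fin 144 → ℝ := fun _ => (144 : ℝ)⁻¹ with hp_def
  have hsum : ∑ ω : Fin 144, p ω = 1 := by
    simp [hp_def, Finset.sum_const, Finset.card_univ]
  have q1 : ∀ a, pr p Y1 a = (6:ℝ)⁻¹ := by
    intro a; rw [hp_def, pr_const, card1 a]; norm_num
  have q2 : ∀ a, pr p Y2 a = (6:ℝ)⁻¹ := by
    intro a; rw [hp_def, pr_const, card2 a]; norm_num
  have q3 : ∀ a, pr p Y3 a = (6:ℝ)⁻¹ := by
    intro a; rw [hp_def, pr_const, card3 a]; norm_num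
  have q12 : ∀ a, pr p (fun ω => (Y1 ω, Y2 ω)) a = (36:ℝ)⁻¹ := by
    intro a; rw [hp_def, pr_const, card12 a]; norm_num
  have q13 : ∀ a, pr p (fun ω => (Y1 ω, Y3 ω)) a = (36:ℝ)⁻¹ := by
    intro a; rw [hp_def, pr_const, card13 a]; norm_num
  have q23 : ∀ a, pr p (fun ω => (Y2 ω, Y3 ω)) a = (36:ℝ)⁻¹ := by
    intro a; rw [hp_def, pr_const, card23 a]; norm_num
  have q123 : ∀ a, pr p (fun ω => (Y1 ω, Y2 ω, Y3 ω)) a = 0 ∨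
      pr p (fun ω => (Y1 ω, Y2 ω, Y3 ω)) a = (144:ℝ)⁻¹ := by
    intro a
    rcases card123 a with h | h
    · left; rw [hp_def, pr_const, h]; norm_num
    · right; rw [hp_def, pr_const, h]; norm_num
  have E1 : ent p Y1 = Real.logb 2 6 := by
    rw [ent_of_qu hsum (fun a => Or.inr (q1 a)), Real.logb_inv, neg_neg]
  have E2 : ent p Y2 = Real.logb 2 6 := by
    rw [ent_of_qu hsum (fun a => Or.inr (q2 a)), Real.logb_inv, neg_neg]
  have E3 : ent p Y3 = Real.logb 2 6 := by
    rw [ent_of_qu hsum (fun a => Or.inr (q3 a)), Real.logb_inv, neg_neg]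
  have E12 : ent p (fun ω => (Y1 ω, Y2 ω)) = Real.logb 2 36 := by
    rw [ent_of_qu hsum (fun a => Or.inr (q12 a)), Real.logb_inv, neg_neg]
  have E13 : ent p (fun ω => (Y1 ω, Y3 ω)) = Real.logb 2 36 := by
    rw [ent_of_qu hsum (fun a => Or.inr (q13 a)), Real.logb_inv, neg_neg]
  have E23 : ent p (fun ω => (Y2 ω, Y3 ω)) = Real.logb 2 36 := by
    rw [ent_of_qu hsum (fun a => Or.inr (q23 a)), Real.logb_inv, neg_neg]
  have E123 : ent p (fun ω => (Y1 ω, Y2 ω, Y3 ω)) = Real.logb 2 144 := by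
    rw [ent_of_qu hsum q123, Real.logb_inv, neg_neg]
  set t := Real.logb 2 3 with ht_def
  have l2 : Real.logb 2 2 = 1 := Real.logb_self_eq_one (by norm_num)
  have l6 : Real.logb 2 6 = 1 + t := by
    rw [show (6:ℝ) = 2 * 3 by norm_num, Real.logb_mul (by norm_num) (by norm_num), l2]
  have l4 : Real.logb 2 4 = 2 := by
    rw [show (4:ℝ) = 2 * 2 by norm_num, Real.logb_mul (by norm_num) (by norm_num), l2]
    norm_num
  have l36 : Real.logb 2 36 = 2 + 2 * t := by
    rw [show (36:ℝ) = 6 * 6 by norm_num, Real.logb_mul (by norm_num) (by norm_num), l6]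
    ring
  have l144 : Real.logb 2 144 = 4 + 2 * t := by
    rw [show (144:ℝ) = 4 * 36 by norm_num, Real.logb_mul (by norm_num) (by norm_num),
      l4, l36]
    ring
  have ht1 : 1 < t := by
    have h := Real.logb_lt_logb (b := 2) (x := 2) (y := 3) (by norm_num) (by norm_num) (by norm_num)
    rw [l2] at h
    exact h
  have ht2 : t < 2 := by
    have h := Real.logb_lt_logb (b := 2) (x := 3) (y := 4) (by norm_num) (by norm_num) (by norm_num)
    rw [l4] at h
    exact h
  have hvec : entVec3 p Y1 Y2 Y3 =
      ![1 + t, 1 + t, 1 + t, 2 + 2 * t, 2 + 2 * t, 2 + 2 * t, 4 + 2 * t] := by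
    unfold entVec3
    rw [E1, E2, E3, E12, E13, E23, E123, l6, l36, l144]
  refine ⟨144, 6, 6, 6, p, Y1, Y2, Y3, ⟨fun _ => by positivity, hsum⟩, ?_, ?_, ?_, ?_⟩
  · exact ⟨⟨(6:ℝ)⁻¹, by norm_num, by norm_num, fun a => Or.inr (q1 a)⟩,
      ⟨(6:ℝ)⁻¹, by norm_num, by norm_num, fun a => Or.inr (q2 a)⟩,
      ⟨(6:ℝ)⁻¹, by norm_num, by norm_num, fun a => Or.inr (q3 a)⟩,
      ⟨(36:ℝ)⁻¹, by norm_num, by norm_num, fun a => Or.inr (q12 a)⟩,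
      ⟨(36:ℝ)⁻¹, by norm_num, by norm_num, fun a => Or.inr (q13 a)⟩,
      ⟨(36:ℝ)⁻¹, by norm_num, by norm_num, fun a => Or.inr (q23 a)⟩,
      ⟨(144:ℝ)⁻¹, by norm_num, by norm_num, q123⟩⟩
  · refine ⟨2, 2, 2, t - 1, by norm_num, by norm_num, by norm_num, by linarith, ?_⟩
    rw [hvec]
    funext i
    fin_cases i <;>
      simp [e1, e2, e3, e123'] <;> ring
  · intro c1 c2 c3 c4 _ _ _ _ heq
    rw [hvec] at heq
    have h0 := congrFun heq 0
    have h1 := congrFun heq 1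
    have h2 := congrFun heq 2
    have h6 := congrFun heq 6
    simp [e1, e2, e3, e123'] at h0 h1 h2 h6
    have hc4 : c4 = t - 1 := by linarith
    have hc1 : c1 = 2 := by linarith
    have hc2 : c2 = 2 := by linarith
    have hc3 : c3 = 2 := by linarith
    exact ⟨by rw [hc1]; norm_num, by rw [hc2]; norm_num, by rw [hc3]; norm_num,
      by rw [hc4]; exact ne_of_gt (by linarith)⟩
  · rintro ⟨l1, l2', l3, m, _, _, _, hm, heq⟩
    rw [hvec] at heq
    have h0 := congrFun heq 0
    have h1 := congrFun heq 1
    have h2 := congrFun heq 2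
    have h6 := congrFun heq 6
    simp [e1, e2, e3, e123'] at h0 h1 h2 h6
    have hL : Real.logb 2 (m : ℝ) = t - 1 := by linarith
    rcases Nat.lt_or_ge m 2 with hm2 | hm2
    · have hm1 : m = 1 := by omega
      rw [hm1] at hL
      simp at hL
      linarith
    · have h2m : (2:ℝ) ≤ (m:ℝ) := by exact_mod_cast hm2
      have := Real.logb_le_logb_of_le (by norm_num : (1:ℝ) < 2) (by norm_num) h2m
      rw [l2] at this
      linarith
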